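/- Let m > 2 be an integer. Then m = k₁(m) if and only if m is a power of 2. -/

import Mathlib

/-- `k1 m` is the smallest `k` with `1 ≤ k ≤ m` such that `C(m, k)` is odd. -/
noncomputable def k1 (m : ℕ) : ℕ := sInf {k | 1 ≤ k ∧ k ≤ m ∧ Odd (m.choose k)}

lemma odd_choose_pow_mul (a : ℕ) : ∀ b : ℕ, Odd b → Odd ((2 ^ a * b).choose (2 ^ a)) := by
  haveI : Fact (Nat.Prime 2) := ⟨Nat.prime_two⟩
  induction a with
  | zero => intro b hb; simpa using hb
  | succ a ih =>
    intro b hb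
    have h := @Choose.choose_modEq_choose_mod_mul_choose_div_nat (2 ^ (a+1) * b) (2 ^ (a+1)) 2 _
    have h1 : (2 ^ (a+1) * b) % 2 = 0 := by
      simp [Nat.mul_mod, Nat.pow_mod]
    have h2 : (2 ^ (a+1)) % 2 = 0 := by
      simp [Nat.pow_mod]
    have h3 : (2 ^ (a+1) * b) / 2 = 2 ^ a * b := by
      rw [pow_succ, mul_comm (2^a) 2, mul_assoc]
      omega
    have h4 : (2 ^ (a+1)) / 2 = 2 ^ a := by
      rw [pow_succ]; omega
    rw [h1, h2, h3, h4] at h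
    simp only [Nat.choose_self, one_mul] at h
    have := ih b hb
    rw [Nat.odd_iff] at this ⊢
    unfold Nat.ModEq at h
    omega

theorem eq_k1_iff_pow_two (m : ℕ) (hm : 2 < m) :
    m = k1 m ↔ ∃ w : ℕ, m = 2 ^ w := by
  have hm0 : m ≠ 0 := by omega
  constructor
  · intro h
    by_contra hpow
    push_neg at hpow
    -- write m = 2 ^ a * b with b odd
    set a := m.factorization 2 with ha
    set b := m / 2 ^ a with hb
    have hmab : 2 ^ a * b = m := Nat.ordProj_mul_ordCompl_eq_self m 2
    have hbodd : Odd b := by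
      rw [← Nat.not_even_iff_odd, even_iff_two_dvd]
      simpa using Nat.not_dvd_ordCompl Nat.prime_two hm0
    have hb1 : 1 < b := by
      rcases Nat.lt_or_ge b 2 with hb2 | hb2
      · interval_cases b
        · omega
        · exact absurd (hpow a) (by omega)
      · omega
    have hodd : Odd (m.choose (2 ^ a)) := by
      rw [← hmab]; exact odd_choose_pow_mul a b hbodd
    have hlt : 2 ^ a < m := by
      calc 2 ^ a < 2 ^ a * b := by
            nlinarith [Nat.two_pow_pos a]
        _ = m := hmab
    have hmem : 2 ^ a ∈ {k | 1 ≤ k ∧ k ≤ m ∧ Odd (m.choose k)} :=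
      ⟨Nat.one_le_two_pow, hlt.le, hodd⟩
    have : k1 m ≤ 2 ^ a := Nat.sInf_le hmem
    omega
  · rintro ⟨w, rfl⟩
    have hset : {k | 1 ≤ k ∧ k ≤ 2 ^ w ∧ Odd ((2 ^ w).choose k)} = {2 ^ w} := by
      ext k
      simp only [Set.mem_setOf_eq, Set.mem_singleton_iff]
      constructor
      · rintro ⟨hk1, hk2, hk3⟩
        by_contra hne
        have : 2 ∣ (2 ^ w).choose k :=
          Nat.Prime.dvd_choose_pow Nat.prime_two (by omega) hne
        rw [Nat.odd_iff] at hk3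
        omega
      · rintro rfl
        exact ⟨Nat.one_le_two_pow, le_rfl, by simp⟩
    unfold k1
    rw [hset]
    simp
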